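/- arXiv:1705.01433 — 2 statements merged into one kernel-verified Lean document; each statement's English description precedes it below -/
import Mathlib

section
/- Consider a Richman game and a vertex v. For every t ∈ ℕ, if Player 1's initial budget exceeds R(v, t), then Player 1 has a strategy that guarantees that the outcome reaches his target v_R within at most t rounds, regardless of Player 2's strategy. -/
open scoped Classical

/-! ### Bidding games: the basic model -/

/-- One round of a bidding game: the vertex the token was moved to, the winning bid,
and whether Player 1 won the bidding. -/
structure BidRound (V : Type) where
  dest : V
  bid : ℝ
  p1Won : Bool

/-- A history: the initial vertex together with the list of rounds played so far. -/
structure Hist (V : Type) where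
  init : V
  rounds : List (BidRound V)

/-- The vertex currently occupied by the token. -/
def Hist.cur {V : Type} (h : Hist V) : V :=
  h.rounds.getLast?.elim h.init BidRound.dest

/-- The net payment of Player 1 so far (bids paid upon winning minus bids received). -/
def Hist.pay1 {V : Type} (h : Hist V) : ℝ :=
  (h.rounds.map (fun r => if r.p1Won then r.bid else -r.bid)).sum

/-- The net payment of Player 2 so far. -/
def Hist.pay2 {V : Type} (h : Hist V) : ℝ := -h.pay1

/-- The sum of the weights of all vertices visited so far (including the current one). -/
def Hist.energyAll {V : Type} (w : V → ℤ) (h : Hist V) : ℤ :=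
  w h.init + (h.rounds.map (fun r => w r.dest)).sum

/-- A strategy: maps a history to a bid and the vertex to move to upon winning. -/
def Strat (V : Type) := Hist V → ℝ × V

/-- A tie-breaking mechanism: decides at each history whether Player 1 wins a tie. -/
def TieBreak (V : Type) := Hist V → Bool

/-- A bidding game: a finite directed graph in which every vertex has an outgoing edge. -/
structure BiddingGame (V : Type) [Fintype V] where
  E : V → V → Prop
  total : ∀ v, ∃ u, E v u

/-- One round of play: both players bid; the higher bidder (Player 1 upon a tie won by
the tie-breaking mechanism) pays his bid to the other player and moves the token. -/
noncomputable def extend {V : Type} (tb : TieBreak V) (f1 f2 : Strat V) (h : Hist V) : Hist V :=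
  if (f2 h).1 < (f1 h).1 ∨ ((f1 h).1 = (f2 h).1 ∧ tb h = true) then
    ⟨h.init, h.rounds ++ [⟨(f1 h).2, (f1 h).1, true⟩]⟩
  else
    ⟨h.init, h.rounds ++ [⟨(f2 h).2, (f2 h).1, false⟩]⟩

/-- The history after `n` rounds, starting at `v0`. -/
noncomputable def play {V : Type} (tb : TieBreak V) (f1 f2 : Strat V) (v0 : V) : ℕ → Hist V
  | 0 => ⟨v0, []⟩
  | n + 1 => extend tb f1 f2 (play tb f1 f2 v0 n)

/-- The vertex occupied after `n` rounds. -/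
noncomputable def visit {V : Type} (tb : TieBreak V) (f1 f2 : Strat V) (v0 : V) (n : ℕ) : V :=
  (play tb f1 f2 v0 n).cur

/-- The energy (sum of weights) of the prefix of length `n` of the outcome. -/
noncomputable def energy {V : Type} (w : V → ℤ) (tb : TieBreak V) (f1 f2 : Strat V) (v0 : V)
    (n : ℕ) : ℤ :=
  ∑ i ∈ Finset.range n, w (visit tb f1 f2 v0 i)

/-- Player 1's strategy is legal w.r.t. the initial budget `B`: along any play, his bids
are nonnegative, never exceed his current budget, and his moves follow edges. -/
def Legal1 {V : Type} [Fintype V] (G : BiddingGame V) (f1 : Strat V) (B : ℝ) : Prop :=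
  ∀ (tb : TieBreak V) (f2 : Strat V) (v0 : V) (n : ℕ),
    0 ≤ (f1 (play tb f1 f2 v0 n)).1 ∧
    (f1 (play tb f1 f2 v0 n)).1 ≤ B - (play tb f1 f2 v0 n).pay1 ∧
    G.E (play tb f1 f2 v0 n).cur (f1 (play tb f1 f2 v0 n)).2

/-- Player 2's strategy is legal w.r.t. the initial budget `B`. -/
def Legal2 {V : Type} [Fintype V] (G : BiddingGame V) (f2 : Strat V) (B : ℝ) : Prop :=
  ∀ (tb : TieBreak V) (f1 : Strat V) (v0 : V) (n : ℕ),
    0 ≤ (f2 (play tb f1 f2 v0 n)).1 ∧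
    (f2 (play tb f1 f2 v0 n)).1 ≤ B - (play tb f1 f2 v0 n).pay2 ∧
    G.E (play tb f1 f2 v0 n).cur (f2 (play tb f1 f2 v0 n)).2

/-- A memoryless strategy: its action depends only on the current vertex and the
player's current budget (equivalently, the net payments so far). -/
def Memoryless {V : Type} (f : Strat V) : Prop :=
  ∀ h h' : Hist V, h.cur = h'.cur → h.pay1 = h'.pay1 → f h = f h'

/-- A memoryless strategy in a mean-payoff game: its action depends only on the current
vertex, the player's current budget, and the current energy level. -/
def MemorylessE {V : Type} (w : V → ℤ) (f : Strat V) : Prop :=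
  ∀ h h' : Hist V, h.cur = h'.cur → h.pay1 = h'.pay1 →
    h.energyAll w = h'.energyAll w → f h = f h'

/-- A constant-memory strategy for Player 2 (Max): the action depends only on the current
vertex, Player 2's current budget, the current energy level, and a memory state ranging
over a finite set (of size independent of the history), updated round by round. -/
def FiniteMemory2 {V : Type} (w : V → ℤ) (f : Strat V) (B : ℝ) : Prop :=
  ∃ (M : Type) (_ : Fintype M) (m0 : M) (upd : M → BidRound V → M)
    (act : V → ℝ → ℤ → M → ℝ × V),
    ∀ h : Hist V, f h = act h.cur (B - h.pay2) (h.energyAll w) (h.rounds.foldl upd m0)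

/-- Strong connectivity of the arena. -/
def StronglyConnected {V : Type} [Fintype V] (G : BiddingGame V) : Prop :=
  ∀ v u : V, Relation.ReflTransGen G.E v u

/-! ### Richman games -/

/-- The successors of `v`. -/
noncomputable def BiddingGame.adj {V : Type} [Fintype V] (G : BiddingGame V) (v : V) :
    Finset V :=
  Finset.univ.filter (fun u => G.E v u)

lemma BiddingGame.adj_nonempty {V : Type} [Fintype V] (G : BiddingGame V) (v : V) :
    (G.adj v).Nonempty := by
  obtain ⟨u, hu⟩ := G.total v
  exact ⟨u, by simpa [BiddingGame.adj] using hu⟩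

/-- The Richman function `R(v, i)`. -/
noncomputable def Rfun {V : Type} [Fintype V] (G : BiddingGame V) (vR vS : V) :
    ℕ → V → ℝ
  | 0, v => if v = vR then 0 else 1
  | i + 1, v =>
      if v = vR then 0
      else if v = vS then 1
      else ((G.adj v).sup' (G.adj_nonempty v) (Rfun G vR vS i) +
            (G.adj v).inf' (G.adj_nonempty v) (Rfun G vR vS i)) / 2

/-- The limit Richman function `R(v) = lim_i R(v, i)`; since `i ↦ R(v, i)` is
nonincreasing, the limit equals the infimum. -/
noncomputable def Rlim {V : Type} [Fintype V] (G : BiddingGame V) (vR vS : V)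
    (v : V) : ℝ :=
  ⨅ i : ℕ, Rfun G vR vS i v

/-- Player 1 wins an outcome of a Richman game: `vR` is reached, and `vS` is not
reached before that (the game ends once a target is reached). -/
def Win1Richman {V : Type} (tb : TieBreak V) (f1 f2 : Strat V) (v0 vR vS : V) : Prop :=
  ∃ n, visit tb f1 f2 v0 n = vR ∧ ∀ m < n, visit tb f1 f2 v0 m ≠ vS

/-- Player 2 wins an outcome of a Richman game: `vS` is reached first, or no target is
ever reached. -/
def Win2Richman {V : Type} (tb : TieBreak V) (f1 f2 : Strat V) (v0 vR vS : V) : Prop :=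
  (∃ n, visit tb f1 f2 v0 n = vS ∧ ∀ m < n, visit tb f1 f2 v0 m ≠ vR) ∨
  (∀ n, visit tb f1 f2 v0 n ≠ vR ∧ visit tb f1 f2 v0 n ≠ vS)

/-- Player 1 has a winning strategy in the Richman game from `v0` with budget `B`. -/
def Win1RichmanFrom {V : Type} [Fintype V] (G : BiddingGame V) (vR vS v0 : V)
    (B : ℝ) : Prop :=
  ∀ tb : TieBreak V, ∃ f1 : Strat V, Legal1 G f1 B ∧
    ∀ f2 : Strat V, Legal2 G f2 (1 - B) → Win1Richman tb f1 f2 v0 vR vS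

/-- Player 2 has a winning strategy in the Richman game from `v0` with budget `B`. -/
def Win2RichmanFrom {V : Type} [Fintype V] (G : BiddingGame V) (vR vS v0 : V)
    (B : ℝ) : Prop :=
  ∀ tb : TieBreak V, ∃ f2 : Strat V, Legal2 G f2 B ∧
    ∀ f1 : Strat V, Legal1 G f1 (1 - B) → Win2Richman tb f1 f2 v0 vR vS

/-- `t` is a threshold budget at `v` in the Richman game. -/
def IsThreshRichman {V : Type} [Fintype V] (G : BiddingGame V) (vR vS v : V)
    (t : ℝ) : Prop :=
  (∀ B : ℝ, B ≤ 1 → t < B → Win1RichmanFrom G vR vS v B) ∧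
  (∀ B : ℝ, B ≤ 1 → 1 - t < B → Win2RichmanFrom G vR vS v B)

/-! ### Richman games with target sets -/

def Win1RichmanSet {V : Type} (tb : TieBreak V) (f1 f2 : Strat V) (v0 : V)
    (R S : Set V) : Prop :=
  ∃ n, visit tb f1 f2 v0 n ∈ R ∧ ∀ m < n, visit tb f1 f2 v0 m ∉ S

def Win2RichmanSet {V : Type} (tb : TieBreak V) (f1 f2 : Strat V) (v0 : V)
    (R S : Set V) : Prop :=
  (∃ n, visit tb f1 f2 v0 n ∈ S ∧ ∀ m < n, visit tb f1 f2 v0 m ∉ R) ∨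
  (∀ n, visit tb f1 f2 v0 n ∉ R ∧ visit tb f1 f2 v0 n ∉ S)

/-- `t` is a threshold budget at `v` in the Richman game with target sets `R` and `S`. -/
def IsThreshRichmanSet {V : Type} [Fintype V] (G : BiddingGame V) (R S : Set V)
    (v : V) (t : ℝ) : Prop :=
  (∀ B : ℝ, B ≤ 1 → t < B → ∀ tb : TieBreak V, ∃ f1 : Strat V, Legal1 G f1 B ∧
      ∀ f2 : Strat V, Legal2 G f2 (1 - B) → Win1RichmanSet tb f1 f2 v R S) ∧
  (∀ B : ℝ, B ≤ 1 → 1 - t < B → ∀ tb : TieBreak V, ∃ f2 : Strat V, Legal2 G f2 B ∧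
      ∀ f1 : Strat V, Legal1 G f1 (1 - B) → Win2RichmanSet tb f1 f2 v R S)

/-! ### Reachability games -/

/-- `t` is a threshold budget at `v` in the reachability game with target set `T`. -/
def IsThreshReach {V : Type} [Fintype V] (G : BiddingGame V) (T : Set V) (v : V)
    (t : ℝ) : Prop :=
  (∀ B : ℝ, B ≤ 1 → t < B → ∀ tb : TieBreak V, ∃ f1 : Strat V, Legal1 G f1 B ∧
      ∀ f2 : Strat V, Legal2 G f2 (1 - B) → ∃ n, visit tb f1 f2 v n ∈ T) ∧
  (∀ B : ℝ, B ≤ 1 → 1 - t < B → ∀ tb : TieBreak V, ∃ f2 : Strat V, Legal2 G f2 B ∧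
      ∀ f1 : Strat V, Legal1 G f1 (1 - B) → ∀ n, visit tb f1 f2 v n ∉ T)

/-! ### Parity games -/

/-- Player 1 wins an outcome of a parity game: the maximal parity index visited
infinitely often is odd. -/
def Win1Parity {V : Type} (p : V → ℕ) (tb : TieBreak V) (f1 f2 : Strat V)
    (v0 : V) : Prop :=
  Odd (sSup {k : ℕ | ∀ N : ℕ, ∃ n ≥ N, p (visit tb f1 f2 v0 n) = k})

def Win1ParityFrom {V : Type} [Fintype V] (G : BiddingGame V) (p : V → ℕ) (v0 : V)
    (B : ℝ) : Prop :=
  ∀ tb : TieBreak V, ∃ f1 : Strat V, Legal1 G f1 B ∧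
    ∀ f2 : Strat V, Legal2 G f2 (1 - B) → Win1Parity p tb f1 f2 v0

def Win2ParityFrom {V : Type} [Fintype V] (G : BiddingGame V) (p : V → ℕ) (v0 : V)
    (B : ℝ) : Prop :=
  ∀ tb : TieBreak V, ∃ f2 : Strat V, Legal2 G f2 B ∧
    ∀ f1 : Strat V, Legal1 G f1 (1 - B) → ¬ Win1Parity p tb f1 f2 v0

/-- `t` is a threshold budget at `v` in the parity game. -/
def IsThreshParity {V : Type} [Fintype V] (G : BiddingGame V) (p : V → ℕ) (v : V)
    (t : ℝ) : Prop :=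
  (∀ B : ℝ, B ≤ 1 → t < B → Win1ParityFrom G p v B) ∧
  (∀ B : ℝ, B ≤ 1 → 1 - t < B → Win2ParityFrom G p v B)

/-! ### Mean-payoff games (Min is Player 1, Max is Player 2) -/

/-- The mean-payoff value of the outcome. -/
noncomputable def mpval {V : Type} (w : V → ℤ) (tb : TieBreak V) (f1 f2 : Strat V)
    (v0 : V) : ℝ :=
  Filter.liminf (fun n : ℕ => (energy w tb f1 f2 v0 n : ℝ) / n) Filter.atTop

/-- Min can guarantee a nonpositive mean-payoff value from `v0` with budget `B`. -/
def MinWinsFrom {V : Type} [Fintype V] (G : BiddingGame V) (w : V → ℤ) (v0 : V)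
    (B : ℝ) : Prop :=
  ∀ tb : TieBreak V, ∃ f1 : Strat V, Legal1 G f1 B ∧
    ∀ f2 : Strat V, Legal2 G f2 (1 - B) → mpval w tb f1 f2 v0 ≤ 0

/-- Max can guarantee a strictly positive mean-payoff value from `v0` with budget `B`. -/
def MaxWinsFrom {V : Type} [Fintype V] (G : BiddingGame V) (w : V → ℤ) (v0 : V)
    (B : ℝ) : Prop :=
  ∀ tb : TieBreak V, ∃ f2 : Strat V, Legal2 G f2 B ∧
    ∀ f1 : Strat V, Legal1 G f1 (1 - B) → 0 < mpval w tb f1 f2 v0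

/-- `t` is a threshold budget at `v` in the mean-payoff game. -/
def IsThreshMP {V : Type} [Fintype V] (G : BiddingGame V) (w : V → ℤ) (v : V)
    (t : ℝ) : Prop :=
  (∀ B : ℝ, B ≤ 1 → t < B → MinWinsFrom G w v B) ∧
  (∀ B : ℝ, B ≤ 1 → 1 - t < B → MaxWinsFrom G w v B)

/-! ### The split graph `G^u` and the weighted Richman function -/

/-- Edges of `G^u`: `u` is split into `u_s = Sum.inl u` (keeping the outgoing edges of
`u`, with no incoming edges) and `u_t = Sum.inr ()` (receiving the edges into `u`, with
no outgoing edges). -/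
def splitE {V : Type} [Fintype V] (G : BiddingGame V) (u : V) :
    V ⊕ Unit → V ⊕ Unit → Prop
  | Sum.inl v, Sum.inl x => G.E v x ∧ x ≠ u
  | Sum.inl v, Sum.inr _ => G.E v u
  | Sum.inr _, _ => False

/-- The successors in `G^u` of a vertex `v ∈ V` (i.e. of `Sum.inl v`). -/
noncomputable def succu {V : Type} [Fintype V] (G : BiddingGame V) (u v : V) :
    Finset (V ⊕ Unit) :=
  Finset.univ.filter (fun y => splitE G u (Sum.inl v) y)

lemma succu_nonempty {V : Type} [Fintype V] (G : BiddingGame V) (u v : V) :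
    (succu G u v).Nonempty := by
  obtain ⟨x, hx⟩ := G.total v
  by_cases hxu : x = u
  · refine ⟨Sum.inr (), ?_⟩
    simp only [succu, Finset.mem_filter, Finset.mem_univ, true_and]
    exact show G.E v u from hxu ▸ hx
  · refine ⟨Sum.inl x, ?_⟩
    simp only [succu, Finset.mem_filter, Finset.mem_univ, true_and]
    exact show G.E v x ∧ x ≠ u from ⟨hx, hxu⟩

/-- `W(v⁺)`: the maximal value of `W` over the `G^u`-successors of `v`. -/
noncomputable def supWu {V : Type} [Fintype V] (G : BiddingGame V) (u : V)
    (W : V ⊕ Unit → ℝ) (v : V) : ℝ :=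
  (succu G u v).sup' (succu_nonempty G u v) W

/-- `W(v⁻)`: the minimal value of `W` over the `G^u`-successors of `v`. -/
noncomputable def infWu {V : Type} [Fintype V] (G : BiddingGame V) (u : V)
    (W : V ⊕ Unit → ℝ) (v : V) : ℝ :=
  (succu G u v).inf' (succu_nonempty G u v) W

/-- `W` is a weighted Richman function for the weights `w`, split at `u`:
`W(u_t) = 0` and `W(v) = (W(v⁺) + W(v⁻))/2 + w(v)` for every `v ∈ V`
(`Sum.inl v` represents `v`, in particular `Sum.inl u` is `u_s`). -/
def IsWRichman {V : Type} [Fintype V] (G : BiddingGame V) (w : V → ℝ) (u : V)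
    (W : V ⊕ Unit → ℝ) : Prop :=
  W (Sum.inr ()) = 0 ∧
  ∀ v : V, W (Sum.inl v) = (supWu G u W v + infWu G u W v) / 2 + w v

/-- Projection of `G^u`-vertices back to vertices of `G`. -/
def projU {V : Type} (u : V) : V ⊕ Unit → V := Sum.elim id (fun _ => u)

/-- `w_M`: the maximal absolute value of `W` over `V`. -/
noncomputable def wMax {V : Type} [Fintype V] (W : V ⊕ Unit → ℝ) (u : V) : ℝ :=
  Finset.univ.sup' ⟨u, Finset.mem_univ u⟩ (fun v : V => |W (Sum.inl v)|)

/-- `b_M`: the maximal value of the bid `(W(v⁺) − W(v⁻))/2` over `V`. -/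
noncomputable def bMax {V : Type} [Fintype V] (G : BiddingGame V) (u : V)
    (W : V ⊕ Unit → ℝ) : ℝ :=
  Finset.univ.sup' ⟨u, Finset.mem_univ u⟩
    (fun v : V => (supWu G u W v - infWu G u W v) / 2)

section Statement0Aux

variable {V : Type} [Fintype V]

lemma mem_adj_iff (G : BiddingGame V) {x u : V} : u ∈ G.adj x ↔ G.E x u := by
  simp [BiddingGame.adj]

lemma Rfun_nonneg (G : BiddingGame V) (vR vS : V) :
    ∀ (i : ℕ) (v : V), 0 ≤ Rfun G vR vS i v := by
  intro i
  induction i with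
  | zero => intro v; simp only [Rfun]; split <;> norm_num
  | succ i ih =>
    intro v
    simp only [Rfun]
    split
    · norm_num
    split
    · norm_num
    · have h1 : 0 ≤ (G.adj v).sup' (G.adj_nonempty v) (Rfun G vR vS i) := by
        obtain ⟨u, hu⟩ := G.adj_nonempty v
        exact le_trans (ih u) (Finset.le_sup' _ hu)
      have h2 : 0 ≤ (G.adj v).inf' (G.adj_nonempty v) (Rfun G vR vS i) :=
        Finset.le_inf' _ _ (fun u _ => ih u)
      linarith

lemma Rfun_le_one (G : BiddingGame V) (vR vS : V) :
    ∀ (i : ℕ) (v : V), Rfun G vR vS i v ≤ 1 := by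
  intro i
  induction i with
  | zero => intro v; simp only [Rfun]; split <;> norm_num
  | succ i ih =>
    intro v
    simp only [Rfun]
    split
    · norm_num
    split
    · norm_num
    · have h1 : (G.adj v).sup' (G.adj_nonempty v) (Rfun G vR vS i) ≤ 1 :=
        Finset.sup'_le _ _ (fun u _ => ih u)
      have h2 : (G.adj v).inf' (G.adj_nonempty v) (Rfun G vR vS i) ≤ 1 := by
        obtain ⟨u, hu⟩ := G.adj_nonempty v
        exact le_trans (Finset.inf'_le _ hu) (ih u)
      linarith

lemma Rfun_vS (G : BiddingGame V) {vR vS : V} (hSR : vS ≠ vR) (i : ℕ) :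
    Rfun G vR vS i vS = 1 := by
  cases i with
  | zero => simp [Rfun, hSR]
  | succ i => simp [Rfun, hSR]

lemma cur_concat (i : V) (l : List (BidRound V)) (r : BidRound V) :
    Hist.cur ⟨i, l ++ [r]⟩ = r.dest := by
  simp [Hist.cur]

lemma pay1_concat (i : V) (l : List (BidRound V)) (r : BidRound V) :
    Hist.pay1 ⟨i, l ++ [r]⟩ =
      Hist.pay1 ⟨i, l⟩ + (if r.p1Won then r.bid else -r.bid) := by
  simp [Hist.pay1]

lemma play_rounds_length (tb : TieBreak V) (f1 f2 : Strat V) (v0 : V) :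
    ∀ n, (play tb f1 f2 v0 n).rounds.length = n := by
  intro n
  induction n with
  | zero => rfl
  | succ n ih =>
    show (extend tb f1 f2 (play tb f1 f2 v0 n)).rounds.length = n + 1
    unfold extend
    split <;> simp [ih]

/-- Successor of `x` minimizing `Rfun G vR vS k`. -/
noncomputable def pick (G : BiddingGame V) (vR vS : V) (k : ℕ) (x : V) : V :=
  (Finset.exists_mem_eq_inf' (G.adj_nonempty x) (Rfun G vR vS k)).choose

lemma pick_mem (G : BiddingGame V) (vR vS : V) (k : ℕ) (x : V) :
    pick G vR vS k x ∈ G.adj x :=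
  (Finset.exists_mem_eq_inf' (G.adj_nonempty x) (Rfun G vR vS k)).choose_spec.1

lemma inf_eq_pick (G : BiddingGame V) (vR vS : V) (k : ℕ) (x : V) :
    (G.adj x).inf' (G.adj_nonempty x) (Rfun G vR vS k) =
      Rfun G vR vS k (pick G vR vS k x) :=
  (Finset.exists_mem_eq_inf' (G.adj_nonempty x) (Rfun G vR vS k)).choose_spec.2

/-- Player 1's strategy: at a history of length `n` with current vertex `x`, bid
(the clamp to the legal range of) `(R(x⁺, t−n−1) − R(x⁻, t−n−1))/2` and move to a
successor minimizing `R(·, t−n−1)`. -/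
noncomputable def strat1 (G : BiddingGame V) (vR vS : V) (t : ℕ) (B : ℝ) : Strat V :=
  fun h =>
    (max 0 (min
        (((G.adj h.cur).sup' (G.adj_nonempty h.cur)
            (Rfun G vR vS (t - h.rounds.length - 1)) -
          (G.adj h.cur).inf' (G.adj_nonempty h.cur)
            (Rfun G vR vS (t - h.rounds.length - 1))) / 2)
        (B - h.pay1)),
     pick G vR vS (t - h.rounds.length - 1) h.cur)

lemma strat1_budget_nonneg (G : BiddingGame V) (vR vS : V) (t : ℕ) {B : ℝ}
    (hB0 : 0 ≤ B) (tb : TieBreak V) (f2 : Strat V) (v0 : V) :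
    ∀ n, 0 ≤ B - (play tb (strat1 G vR vS t B) f2 v0 n).pay1 := by
  intro n
  induction n with
  | zero => simpa [play, Hist.pay1] using hB0
  | succ n ih =>
    set f1 := strat1 G vR vS t B with hf1
    set h := play tb f1 f2 v0 n with hh
    have h0 : 0 ≤ (f1 h).1 := le_max_left _ _
    show 0 ≤ B - (extend tb f1 f2 h).pay1
    unfold extend
    split
    · rw [pay1_concat]
      have hb : (f1 h).1 ≤ B - h.pay1 := max_le ih (min_le_right _ _)
      have heta : Hist.pay1 ⟨h.init, h.rounds⟩ = h.pay1 := rfl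
      rw [heta]
      simp only [if_true]
      linarith
    · next hc =>
      rw [pay1_concat]
      have h1 : (f1 h).1 ≤ (f2 h).1 := le_of_not_gt (fun hlt => hc (Or.inl hlt))
      have : Hist.pay1 ⟨h.init, h.rounds⟩ = h.pay1 := rfl
      simp only [this]
      simp only [Bool.false_eq_true, if_neg (by norm_num : ¬False)]
      norm_num
      linarith

lemma strat1_legal (G : BiddingGame V) (vR vS : V) (t : ℕ) {B : ℝ} (hB0 : 0 ≤ B) :
    Legal1 G (strat1 G vR vS t B) B := by
  intro tb f2 v0 n
  refine ⟨le_max_left _ _, ?_, ?_⟩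
  · exact max_le (strat1_budget_nonneg G vR vS t hB0 tb f2 v0 n) (min_le_right _ _)
  · exact (mem_adj_iff G).mp (pick_mem G vR vS _ _)

lemma budget_le_one {G : BiddingGame V} {f2 : Strat V} {B : ℝ}
    (hf2 : Legal2 G f2 (1 - B)) (tb : TieBreak V) (f1 : Strat V) (v0 : V) (n : ℕ) :
    B - (play tb f1 f2 v0 n).pay1 ≤ 1 := by
  obtain ⟨h0, h1, -⟩ := hf2 tb f1 v0 n
  simp only [Hist.pay2] at h1
  linarith

end Statement0Aux

/-- In a Richman game, if Player 1's initial budget exceeds `R(v, t)`,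
then he has a (legal) strategy guaranteeing that, against every (legal) Player 2
strategy, the outcome reaches his target `vR` within at most `t` rounds (the game not
having ended at `vS` before); this holds for every tie-breaking mechanism. -/
theorem richman_win_within_t_rounds
    {V : Type} [Fintype V] (G : BiddingGame V) (vR vS : V) (hRS : vR ≠ vS)
    (v : V) (t : ℕ) (B : ℝ) (hB1 : B ≤ 1) (hB : Rfun G vR vS t v < B)
    (tb : TieBreak V) :
    ∃ f1 : Strat V, Legal1 G f1 B ∧
      ∀ f2 : Strat V, Legal2 G f2 (1 - B) →
        ∃ n ≤ t, visit tb f1 f2 v n = vR ∧ ∀ m < n, visit tb f1 f2 v m ≠ vS := by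
  have hB0 : 0 ≤ B := le_trans (Rfun_nonneg G vR vS t v) (le_of_lt hB)
  refine ⟨strat1 G vR vS t B, strat1_legal G vR vS t hB0, ?_⟩
  intro f2 hf2
  set f1 := strat1 G vR vS t B with hf1def
  have hSR : vS ≠ vR := hRS.symm
  have hbud1 : ∀ n, B - (play tb f1 f2 v n).pay1 ≤ 1 :=
    fun n => budget_le_one hf2 tb f1 v n
  have key : ∀ n, n ≤ t →
      (∃ m ≤ n, visit tb f1 f2 v m = vR ∧ ∀ k < m, visit tb f1 f2 v k ≠ vS) ∨
      (Rfun G vR vS (t - n) (visit tb f1 f2 v n) < B - (play tb f1 f2 v n).pay1 ∧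
       ∀ m ≤ n, visit tb f1 f2 v m ≠ vS) := by
    intro n
    induction n with
    | zero =>
      intro _
      right
      have hv0 : visit tb f1 f2 v 0 = v := by simp [visit, play, Hist.cur]
      have hp0 : (play tb f1 f2 v 0).pay1 = 0 := by simp [play, Hist.pay1]
      have hvns : v ≠ vS := by
        intro hvs
        rw [hvs, Rfun_vS G hSR] at hB
        linarith
      refine ⟨?_, ?_⟩
      · rw [hv0, hp0, Nat.sub_zero]; linarith
      · intro m hm
        have : m = 0 := Nat.le_zero.mp hm
        subst this
        rw [hv0]; exact hvns
    | succ n ih =>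
      intro hn1
      have hn : n ≤ t := Nat.le_of_succ_le hn1
      rcases ih hn with hdone | ⟨hbud, hnvS⟩
      · left
        obtain ⟨m, hm, hrest⟩ := hdone
        exact ⟨m, le_trans hm (Nat.le_succ n), hrest⟩
      by_cases hvR : visit tb f1 f2 v n = vR
      · left
        exact ⟨n, Nat.le_succ n, hvR, fun k hk => hnvS k (le_of_lt hk)⟩
      right
      set x := visit tb f1 f2 v n with hx
      have hvS : x ≠ vS := hnvS n le_rfl
      set k := t - (n + 1) with hkdef
      have htn : t - n = k + 1 := by omega
      rw [htn] at hbud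
      have hRx : Rfun G vR vS (k + 1) x =
          ((G.adj x).sup' (G.adj_nonempty x) (Rfun G vR vS k) +
           (G.adj x).inf' (G.adj_nonempty x) (Rfun G vR vS k)) / 2 := by
        simp only [Rfun]
        rw [if_neg hvR, if_neg hvS]
      rw [hRx] at hbud
      set S := (G.adj x).sup' (G.adj_nonempty x) (Rfun G vR vS k) with hSdef
      set I := (G.adj x).inf' (G.adj_nonempty x) (Rfun G vR vS k) with hIdef
      have hI0 : 0 ≤ I := Finset.le_inf' _ _ (fun u _ => Rfun_nonneg G vR vS k u)
      have hIp : I = Rfun G vR vS k (pick G vR vS k x) := inf_eq_pick G vR vS k x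
      have hIS : I ≤ S := by
        rw [hIp]; exact Finset.le_sup' _ (pick_mem G vR vS k x)
      set h := play tb f1 f2 v n with hh
      have hlen : h.rounds.length = n := play_rounds_length tb f1 f2 v n
      have hcur : h.cur = x := rfl
      have hidx : t - h.rounds.length - 1 = k := by rw [hlen]; omega
      have hpay : h.pay1 = (play tb f1 f2 v n).pay1 := rfl
      have hact : f1 h = (max 0 (min ((S - I) / 2) (B - h.pay1)), pick G vR vS k x) := by
        rw [hf1def]
        simp only [strat1, hidx, hcur, ← hSdef, ← hIdef]
      have hbid : (f1 h).1 = (S - I) / 2 := by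
        rw [hact]
        have h1 : (S - I) / 2 ≤ B - h.pay1 := by rw [hpay]; linarith
        have h2 : (0 : ℝ) ≤ (S - I) / 2 := by linarith
        simp [min_eq_left h1, max_eq_right h2]
      have hdest : (f1 h).2 = pick G vR vS k x := by rw [hact]
      have hplay : play tb f1 f2 v (n + 1) = extend tb f1 f2 h := rfl
      have hnew : Rfun G vR vS (t - (n + 1)) (visit tb f1 f2 v (n + 1)) <
          B - (play tb f1 f2 v (n + 1)).pay1 := by
        rw [← hkdef]
        by_cases hc : (f2 h).1 < (f1 h).1 ∨ ((f1 h).1 = (f2 h).1 ∧ tb h = true)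
        · -- Player 1 wins the bidding
          have hP : play tb f1 f2 v (n + 1) =
              ⟨h.init, h.rounds ++ [⟨(f1 h).2, (f1 h).1, true⟩]⟩ := by
            rw [hplay]; unfold extend; rw [if_pos hc]
          have hv' : visit tb f1 f2 v (n + 1) = pick G vR vS k x := by
            rw [visit, hP, cur_concat, ← hdest]
          have hp' : (play tb f1 f2 v (n + 1)).pay1 = h.pay1 + (S - I) / 2 := by
            rw [hP, pay1_concat]
            have : Hist.pay1 ⟨h.init, h.rounds⟩ = h.pay1 := rfl
            rw [this]
            simp [hbid]
          rw [hv', hp', ← hIp]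
          rw [hpay] at *
          linarith
        · -- Player 2 wins the bidding
          have hle : (f1 h).1 ≤ (f2 h).1 :=
            le_of_not_gt (fun hlt => hc (Or.inl hlt))
          have hP : play tb f1 f2 v (n + 1) =
              ⟨h.init, h.rounds ++ [⟨(f2 h).2, (f2 h).1, false⟩]⟩ := by
            rw [hplay]; unfold extend; rw [if_neg hc]
          have hv' : visit tb f1 f2 v (n + 1) = (f2 h).2 := by
            rw [visit, hP, cur_concat]
          have hp' : (play tb f1 f2 v (n + 1)).pay1 = h.pay1 - (f2 h).1 := by
            rw [hP, pay1_concat]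
            have : Hist.pay1 ⟨h.init, h.rounds⟩ = h.pay1 := rfl
            rw [this]
            simp only [Bool.false_eq_true, if_false]
            ring
          have hedge : G.E x (f2 h).2 := by
            have := (hf2 tb f1 v n).2.2
            rwa [← hh, hcur] at this
          have hRle : Rfun G vR vS k (f2 h).2 ≤ S :=
            Finset.le_sup' _ ((mem_adj_iff G).mpr hedge)
          rw [hv', hp']
          rw [hbid] at hle
          rw [hpay] at *
          linarith
      refine ⟨hnew, ?_⟩
      intro m hm
      rcases eq_or_lt_of_le hm with heq | hlt
      · subst heq
        intro hvs
        rw [hvs, Rfun_vS G hSR] at hnew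
        linarith [hbud1 (n + 1)]
      · exact hnvS m (Nat.lt_succ_iff.mp hlt)
  rcases key t le_rfl with ⟨m, hm, hrest⟩ | ⟨hbud, hnvS⟩
  · exact ⟨m, hm, hrest⟩
  · by_cases hvR : visit tb f1 f2 v t = vR
    · exact ⟨t, le_rfl, hvR, fun k hk => hnvS k (le_of_lt hk)⟩
    · exfalso
      rw [Nat.sub_self] at hbud
      have h1 : Rfun G vR vS 0 (visit tb f1 f2 v t) = 1 := by
        simp [Rfun, hvR]
      rw [h1] at hbud
      linarith [hbud1 t]
end

section
/- Consider a strongly-connected parity bidding game G = (V, E, p). There exists τ ∈ {0,1} such that the threshold budget of every vertex v ∈ V equals τ, and τ = 0 if and only if max_{v ∈ V} p(v) is odd. That is: if the maximal parity index in G is odd, then from every vertex and with every strictly positive initial budget Player 1 has a winning strategy, and if the maximal parity index is even, then from every vertex and with every strictly positive initial budget Player 2 has a winning strategy. -/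
open scoped Classical

namespace ParityAux

variable {V : Type} [Fintype V]

lemma finset_inf'_mono_fun {α β : Type*} [LinearOrder α] {s : Finset β} {H : s.Nonempty}
    {f g : β → α} (h : ∀ b ∈ s, f b ≤ g b) : s.inf' H f ≤ s.inf' H g :=
  Finset.le_inf' _ _ (fun b hb => le_trans (Finset.inf'_le _ hb) (h b hb))

lemma finset_inf'_le_sup' {α β : Type*} [LinearOrder α] {s : Finset β} (H : s.Nonempty)
    (f : β → α) : s.inf' H f ≤ s.sup' H f := by
  obtain ⟨b, hb⟩ := H
  exact le_trans (Finset.inf'_le _ hb) (Finset.le_sup' _ hb)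

/-- Finite-step Richman values on the split graph `G^t`. -/
noncomputable def RS (G : BiddingGame V) (t : V) : ℕ → V ⊕ Unit → ℝ
  | 0, Sum.inl _ => 1
  | 0, Sum.inr _ => 0
  | i+1, Sum.inl v => ((succu G t v).sup' (succu_nonempty G t v) (RS G t i)
      + (succu G t v).inf' (succu_nonempty G t v) (RS G t i)) / 2
  | _+1, Sum.inr _ => 0

variable (G : BiddingGame V) (t : V)

lemma RS_inr (i : ℕ) (u : Unit) : RS G t i (Sum.inr u) = 0 := by
  cases i <;> rfl

lemma RS_succ_inl (i : ℕ) (v : V) :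
    RS G t (i+1) (Sum.inl v) = ((succu G t v).sup' (succu_nonempty G t v) (RS G t i)
      + (succu G t v).inf' (succu_nonempty G t v) (RS G t i)) / 2 := rfl

lemma RS_nonneg : ∀ (i : ℕ) (x : V ⊕ Unit), 0 ≤ RS G t i x := by
  intro i
  induction i with
  | zero => rintro (v | u) <;> simp [RS]
  | succ i ih =>
    rintro (v | u)
    · rw [RS_succ_inl]
      have h1 : (0:ℝ) ≤ (succu G t v).inf' (succu_nonempty G t v) (RS G t i) :=
        Finset.le_inf' _ _ (fun y _ => ih y)
      have h2 : (succu G t v).inf' (succu_nonempty G t v) (RS G t i) ≤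
          (succu G t v).sup' (succu_nonempty G t v) (RS G t i) :=
        finset_inf'_le_sup' _ _
      linarith
    · simp [RS_inr]

lemma RS_le_one : ∀ (i : ℕ) (x : V ⊕ Unit), RS G t i x ≤ 1 := by
  intro i
  induction i with
  | zero => rintro (v | u) <;> simp [RS]
  | succ i ih =>
    rintro (v | u)
    · rw [RS_succ_inl]
      have h1 : (succu G t v).sup' (succu_nonempty G t v) (RS G t i) ≤ 1 :=
        Finset.sup'_le _ _ (fun y _ => ih y)
      have h2 : (succu G t v).inf' (succu_nonempty G t v) (RS G t i) ≤ 1 := by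
        obtain ⟨y, hy⟩ := succu_nonempty G t v
        exact le_trans (Finset.inf'_le _ hy) (ih y)
      linarith
    · simp [RS_inr]

lemma RS_succ_le : ∀ (i : ℕ) (x : V ⊕ Unit), RS G t (i+1) x ≤ RS G t i x := by
  intro i
  induction i with
  | zero =>
    rintro (v | u)
    · rw [RS_succ_inl]
      have h1 : (succu G t v).sup' (succu_nonempty G t v) (RS G t 0) ≤ 1 :=
        Finset.sup'_le _ _ (fun y _ => RS_le_one G t 0 y)
      have h2 : (succu G t v).inf' (succu_nonempty G t v) (RS G t 0) ≤ 1 := by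
        obtain ⟨y, hy⟩ := succu_nonempty G t v
        exact le_trans (Finset.inf'_le _ hy) (RS_le_one G t 0 y)
      have : RS G t 0 (Sum.inl v) = 1 := rfl
      rw [this]; linarith
    · simp [RS_inr]
  | succ i ih =>
    rintro (v | u)
    · rw [RS_succ_inl, RS_succ_inl]
      have h1 : (succu G t v).sup' (succu_nonempty G t v) (RS G t (i+1)) ≤
          (succu G t v).sup' (succu_nonempty G t v) (RS G t i) :=
        Finset.sup'_mono_fun (fun y _ => ih y)
      have h2 : (succu G t v).inf' (succu_nonempty G t v) (RS G t (i+1)) ≤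
          (succu G t v).inf' (succu_nonempty G t v) (RS G t i) :=
        finset_inf'_mono_fun (fun y _ => ih y)
      linarith
    · simp [RS_inr]

lemma RS_anti {i j : ℕ} (hij : i ≤ j) (x : V ⊕ Unit) : RS G t j x ≤ RS G t i x := by
  have h : Antitone (fun n => RS G t n x) :=
    antitone_nat_of_succ_le (fun n => RS_succ_le G t n x)
  exact h hij

/-- The limit Richman value. -/
noncomputable def rr (G : BiddingGame V) (t : V) (x : V ⊕ Unit) : ℝ :=
  ⨅ i : ℕ, RS G t i x

lemma rr_bddBelow (x : V ⊕ Unit) : BddBelow (Set.range fun i => RS G t i x) :=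
  ⟨0, by rintro _ ⟨i, rfl⟩; exact RS_nonneg G t i x⟩

lemma rr_nonneg (x : V ⊕ Unit) : 0 ≤ rr G t x :=
  le_ciInf (fun i => RS_nonneg G t i x)

lemma rr_le (i : ℕ) (x : V ⊕ Unit) : rr G t x ≤ RS G t i x :=
  ciInf_le (rr_bddBelow G t x) i

lemma rr_le_one (x : V ⊕ Unit) : rr G t x ≤ 1 :=
  le_trans (rr_le G t 0 x) (RS_le_one G t 0 x)

lemma rr_inr (u : Unit) : rr G t (Sum.inr u) = 0 :=
  le_antisymm (le_trans (rr_le G t 0 _) (by simp [RS_inr])) (rr_nonneg G t _)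

lemma rr_ge_half (v : V) :
    ((succu G t v).sup' (succu_nonempty G t v) (rr G t)
      + (succu G t v).inf' (succu_nonempty G t v) (rr G t)) / 2 ≤ rr G t (Sum.inl v) := by
  apply le_ciInf
  intro i
  cases i with
  | zero =>
    have h1 : (succu G t v).sup' (succu_nonempty G t v) (rr G t) ≤ 1 :=
      Finset.sup'_le _ _ (fun y _ => rr_le_one G t y)
    have h2 : (succu G t v).inf' (succu_nonempty G t v) (rr G t) ≤ 1 := by
      obtain ⟨y, hy⟩ := succu_nonempty G t v
      exact le_trans (Finset.inf'_le _ hy) (rr_le_one G t y)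
    have : RS G t 0 (Sum.inl v) = 1 := rfl
    rw [this]; linarith
  | succ i =>
    rw [RS_succ_inl]
    have h1 : (succu G t v).sup' (succu_nonempty G t v) (rr G t) ≤
        (succu G t v).sup' (succu_nonempty G t v) (RS G t i) :=
      Finset.sup'_mono_fun (fun y _ => rr_le G t i y)
    have h2 : (succu G t v).inf' (succu_nonempty G t v) (rr G t) ≤
        (succu G t v).inf' (succu_nonempty G t v) (RS G t i) :=
      finset_inf'_mono_fun (fun y _ => rr_le G t i y)
    linarith

lemma rr_le_half (v : V) :
    rr G t (Sum.inl v) ≤ ((succu G t v).sup' (succu_nonempty G t v) (rr G t)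
      + (succu G t v).inf' (succu_nonempty G t v) (rr G t)) / 2 := by
  apply le_of_forall_pos_le_add
  intro ε hε
  have hch : ∀ x : V ⊕ Unit, ∃ i, RS G t i x < rr G t x + ε / 2 := by
    intro x
    exact exists_lt_of_ciInf_lt (by simpa [rr] using (by linarith [rr_nonneg G t x] : 
      rr G t x < rr G t x + ε / 2))
  choose jf hjf using hch
  set J : ℕ := (succu G t v).sup jf with hJ
  have hJle : ∀ y ∈ succu G t v, RS G t J y < rr G t y + ε / 2 := by
    intro y hy
    exact lt_of_le_of_lt (RS_anti G t (Finset.le_sup hy) y) (hjf y)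
  have hsup : (succu G t v).sup' (succu_nonempty G t v) (RS G t J) ≤
      (succu G t v).sup' (succu_nonempty G t v) (rr G t) + ε / 2 := by
    apply Finset.sup'_le
    intro y hy
    exact le_trans (hJle y hy).le (by
      have := Finset.le_sup' (rr G t) hy
      linarith)
  have hinf : (succu G t v).inf' (succu_nonempty G t v) (RS G t J) ≤
      (succu G t v).inf' (succu_nonempty G t v) (rr G t) + ε / 2 := by
    obtain ⟨y0, hy0, hy0e⟩ := Finset.exists_mem_eq_inf' (succu_nonempty G t v) (rr G t)
    calc (succu G t v).inf' (succu_nonempty G t v) (RS G t J) ≤ RS G t J y0 :=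
          Finset.inf'_le _ hy0
      _ ≤ rr G t y0 + ε / 2 := (hJle y0 hy0).le
      _ = (succu G t v).inf' (succu_nonempty G t v) (rr G t) + ε / 2 := by rw [hy0e]
  calc rr G t (Sum.inl v) ≤ RS G t (J+1) (Sum.inl v) := rr_le G t (J+1) _
    _ = ((succu G t v).sup' (succu_nonempty G t v) (RS G t J)
        + (succu G t v).inf' (succu_nonempty G t v) (RS G t J)) / 2 := rfl
    _ ≤ _ := by linarith

lemma mem_succu {v : V} {y : V ⊕ Unit} :
    y ∈ succu G t v ↔ splitE G t (Sum.inl v) y := by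
  simp [succu]

lemma rr_zero (hsc : StronglyConnected G) (v : V) : rr G t (Sum.inl v) = 0 := by
  have hne : Nonempty V := ⟨t⟩
  set M : ℝ := Finset.univ.sup' Finset.univ_nonempty (fun v : V => rr G t (Sum.inl v)) with hM
  have hvM : ∀ v : V, rr G t (Sum.inl v) ≤ M := fun v =>
    Finset.le_sup' (fun v : V => rr G t (Sum.inl v)) (Finset.mem_univ v)
  suffices hM0 : M ≤ 0 by
    exact le_antisymm (le_trans (hvM v) hM0) (rr_nonneg G t _)
  by_contra hM0
  push_neg at hM0
  -- key closure property
  have key : ∀ a : V, rr G t (Sum.inl a) = M → ∀ u : V, G.E a u →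
      u ≠ t ∧ rr G t (Sum.inl u) = M := by
    intro a ha u he
    have hsup : (succu G t a).sup' (succu_nonempty G t a) (rr G t) ≤ M := by
      apply Finset.sup'_le
      rintro (w | w) hw
      · exact hvM w
      · rw [rr_inr]; exact hM0.le
    have hinf : M ≤ (succu G t a).inf' (succu_nonempty G t a) (rr G t) := by
      have := rr_le_half G t a
      rw [ha] at this
      linarith
    have hmemv : ∀ y ∈ succu G t a, M ≤ rr G t y := fun y hy =>
      le_trans hinf (Finset.inf'_le _ hy)
    have hunt : u ≠ t := by
      intro hut
      have : (Sum.inr () : V ⊕ Unit) ∈ succu G t a := by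
        rw [mem_succu]
        exact (show G.E a t from hut ▸ he)
      have := hmemv _ this
      rw [rr_inr] at this
      linarith
    have : (Sum.inl u : V ⊕ Unit) ∈ succu G t a := by
      rw [mem_succu]
      exact ⟨he, hunt⟩
    exact ⟨hunt, le_antisymm (hvM u) (hmemv _ this)⟩
  have chain : ∀ a b : V, Relation.ReflTransGen G.E a b →
      rr G t (Sum.inl a) = M → rr G t (Sum.inl b) = M := by
    intro a b h
    induction h with
    | refl => exact id
    | tail hab e ih => exact fun ha => (key _ (ih ha) _ e).2
  have final : ∀ a : V, rr G t (Sum.inl a) = M → a ≠ t → False := by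
    intro a ha hat
    rcases (hsc a t).cases_tail with h | ⟨c, hac, hct⟩
    · exact hat h.symm
    · exact (key c (chain a c hac ha) t hct).1 rfl
  obtain ⟨vb, _, hvb⟩ := Finset.exists_mem_eq_sup' (Finset.univ_nonempty (α := V))
    (fun v : V => rr G t (Sum.inl v))
  have hvbM : rr G t (Sum.inl vb) = M := by rw [hM]; exact hvb.symm
  by_cases hvbt : vb = t
  · -- the maximum is attained at t; move to a successor of t
    obtain ⟨u, hu⟩ := G.total t
    have := key vb hvbM u (by rw [hvbt]; exact hu)
    exact final u this.2 this.1
  · exact final vb hvbM hvbt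

/-- Restart index. -/
noncomputable def rst (G : BiddingGame V) (t : V) (x : V) (β : ℝ) : ℕ :=
  max 1 (sInf {j | RS G t j (Sum.inl x) < β})

lemma one_le_rst (x : V) (β : ℝ) : 1 ≤ rst G t x β := le_max_left _ _

lemma RS_rst_lt (hsc : StronglyConnected G) {x : V} {β : ℝ} (hβ : 0 < β) (hβ1 : β ≤ 1) :
    RS G t (rst G t x β) (Sum.inl x) < β := by
  have hiInf : (⨅ i : ℕ, RS G t i (Sum.inl x)) < β := by
    have := rr_zero G t hsc x
    rw [rr] at this
    rw [this]; exact hβ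
  obtain ⟨i, hi⟩ := exists_lt_of_ciInf_lt hiInf
  have hne : {j | RS G t j (Sum.inl x) < β}.Nonempty := ⟨i, hi⟩
  have hmem := Nat.sInf_mem hne
  have h0 : sInf {j | RS G t j (Sum.inl x) < β} ≠ 0 := by
    intro h
    rw [h] at hmem
    have hmem' : RS G t 0 (Sum.inl x) < β := hmem
    have h1 : RS G t 0 (Sum.inl x) = 1 := rfl
    rw [h1] at hmem'
    exact absurd hmem' (not_lt.2 hβ1)
  rw [rst, max_eq_right (Nat.one_le_iff_ne_zero.2 h0)]
  exact hmem


/-! ### Player 1 machinery -/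

noncomputable def sup1 (G : BiddingGame V) (t : V) (i : ℕ) (v : V) : ℝ :=
  (succu G t v).sup' (succu_nonempty G t v) (RS G t i)

noncomputable def inf1 (G : BiddingGame V) (t : V) (i : ℕ) (v : V) : ℝ :=
  (succu G t v).inf' (succu_nonempty G t v) (RS G t i)

noncomputable def Dl (G : BiddingGame V) (t : V) (i : ℕ) (v : V) : ℝ :=
  (sup1 G t i v - inf1 G t i v) / 2

lemma RS_succ_inl' (i : ℕ) (v : V) :
    RS G t (i+1) (Sum.inl v) = (sup1 G t i v + inf1 G t i v) / 2 := rfl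

lemma inf1_nonneg (i : ℕ) (v : V) : 0 ≤ inf1 G t i v :=
  Finset.le_inf' _ _ (fun y _ => RS_nonneg G t i y)

lemma inf1_le_sup1 (i : ℕ) (v : V) : inf1 G t i v ≤ sup1 G t i v :=
  finset_inf'_le_sup' _ _

lemma Dl_nonneg (i : ℕ) (v : V) : 0 ≤ Dl G t i v := by
  have := inf1_le_sup1 G t i v
  rw [Dl]; linarith

lemma Dl_le_RS (i : ℕ) (v : V) : Dl G t i v ≤ RS G t (i+1) (Sum.inl v) := by
  have := inf1_nonneg G t i v
  rw [Dl, RS_succ_inl']; linarith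

lemma RS_le_sup1 (i : ℕ) (v : V) {y : V ⊕ Unit} (hy : y ∈ succu G t v) :
    RS G t i y ≤ sup1 G t i v :=
  Finset.le_sup' _ hy

noncomputable def mv (G : BiddingGame V) (t : V) (i : ℕ) (v : V) : V :=
  projU t (Classical.choose (Finset.exists_mem_eq_inf' (succu_nonempty G t v) (RS G t i)))

lemma mv_spec (i : ℕ) (v : V) : G.E v (mv G t i v) ∧
    ((mv G t i v = t ∧ inf1 G t i v = 0) ∨
     (mv G t i v ≠ t ∧ inf1 G t i v = RS G t i (Sum.inl (mv G t i v)))) := by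
  have hspec := Classical.choose_spec (Finset.exists_mem_eq_inf' (succu_nonempty G t v)
    (RS G t i))
  obtain ⟨hmem, heq⟩ := hspec
  rw [mem_succu] at hmem
  rcases hch : (Classical.choose (Finset.exists_mem_eq_inf' (succu_nonempty G t v)
      (RS G t i))) with u | u
  · rw [hch] at hmem heq
    have h1 : mv G t i v = u := by rw [mv, hch]; rfl
    have h2 : inf1 G t i v = RS G t i (Sum.inl u) := heq
    refine ⟨h1 ▸ hmem.1, Or.inr ⟨h1 ▸ hmem.2, ?_⟩⟩
    rw [h1, h2]
  · rw [hch] at hmem heq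
    have h1 : mv G t i v = t := by rw [mv, hch]; rfl
    have h2 : inf1 G t i v = RS G t i (Sum.inr u) := heq
    refine ⟨by rw [h1]; exact hmem, Or.inl ⟨h1, ?_⟩⟩
    rw [h2, RS_inr]

/-- State machine for Player 1's strategy. -/
noncomputable def step1 (G : BiddingGame V) (t : V) : ℝ × ℕ → BidRound V → ℝ × ℕ :=
  fun a r =>
    ((if r.p1Won then a.1 - r.bid else a.1 + r.bid),
     if r.dest = t ∨ a.2 ≤ 1 then rst G t r.dest (if r.p1Won then a.1 - r.bid else a.1 + r.bid)
     else a.2 - 1)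

noncomputable def st1 (G : BiddingGame V) (t : V) (B : ℝ) (h : Hist V) : ℝ × ℕ :=
  h.rounds.foldl (step1 G t) (B, rst G t h.init B)

/-- Player 1's strategy. -/
noncomputable def fP1 (G : BiddingGame V) (t : V) (B : ℝ) : Strat V := fun h =>
  (min (Dl G t ((st1 G t B h).2 - 1) h.cur) (B - h.pay1),
   mv G t ((st1 G t B h).2 - 1) h.cur)

lemma st1_fst (B : ℝ) (h : Hist V) : (st1 G t B h).1 = B - h.pay1 := by
  have key : ∀ (l : List (BidRound V)) (a : ℝ × ℕ),
      (l.foldl (step1 G t) a).1 = a.1 -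
        (l.map (fun r => if r.p1Won then r.bid else -r.bid)).sum := by
    intro l
    induction l with
    | nil => intro a; simp
    | cons r l ih =>
      intro a
      rw [List.foldl_cons, ih, List.map_cons, List.sum_cons]
      simp only [step1]
      by_cases hw : r.p1Won <;> simp [hw] <;> ring
  rw [st1, key, Hist.pay1]

lemma st1_snd_pos (B : ℝ) (h : Hist V) : 1 ≤ (st1 G t B h).2 := by
  have key : ∀ (l : List (BidRound V)) (a : ℝ × ℕ), 1 ≤ a.2 →
      1 ≤ (l.foldl (step1 G t) a).2 := by
    intro l
    induction l with
    | nil => intro a ha; exact ha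
    | cons r l ih =>
      intro a ha
      rw [List.foldl_cons]
      apply ih
      simp only [step1]
      by_cases hcond : r.dest = t ∨ a.2 ≤ 1
      · rw [if_pos hcond]; exact one_le_rst G t _ _
      · rw [if_neg hcond]
        push_neg at hcond
        omega
  exact key _ _ (one_le_rst G t _ _)

lemma hist_cur_snoc (x : V) (l : List (BidRound V)) (r : BidRound V) :
    Hist.cur ⟨x, l ++ [r]⟩ = r.dest := by
  simp [Hist.cur]

lemma hist_pay1_snoc (x : V) (l : List (BidRound V)) (r : BidRound V) :
    Hist.pay1 ⟨x, l ++ [r]⟩ = Hist.pay1 ⟨x, l⟩ + (if r.p1Won then r.bid else -r.bid) := by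
  simp [Hist.pay1]

lemma st1_snoc (B : ℝ) (x : V) (l : List (BidRound V)) (r : BidRound V) :
    st1 G t B ⟨x, l ++ [r]⟩ = step1 G t (st1 G t B ⟨x, l⟩) r := by
  simp [st1, List.foldl_append]

lemma fP1_beta_nonneg (B : ℝ) (hB : 0 < B) (tb : TieBreak V) (f2 : Strat V) (v0 : V) :
    ∀ n, 0 ≤ B - (play tb (fP1 G t B) f2 v0 n).pay1 := by
  intro n
  induction n with
  | zero =>
    simp [play, Hist.pay1]
    exact hB.le
  | succ n ih =>
    set f1 := fP1 G t B with hf1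
    set h := play tb f1 f2 v0 n with hh
    have hplay : play tb f1 f2 v0 (n+1) = extend tb f1 f2 h := rfl
    by_cases hc : (f2 h).1 < (f1 h).1 ∨ ((f1 h).1 = (f2 h).1 ∧ tb h = true)
    · have hh' : play tb f1 f2 v0 (n+1) = ⟨h.init, h.rounds ++ [⟨(f1 h).2, (f1 h).1, true⟩]⟩ := by
        rw [hplay, extend, if_pos hc]
      rw [hh']
      rw [show (⟨h.init, h.rounds ++ [⟨(f1 h).2, (f1 h).1, true⟩]⟩ : Hist V).pay1
        = h.pay1 + (f1 h).1 from by
          rw [hist_pay1_snoc]; simp]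
      have : (f1 h).1 ≤ B - h.pay1 := min_le_right _ _
      linarith
    · have hh' : play tb f1 f2 v0 (n+1) = ⟨h.init, h.rounds ++ [⟨(f2 h).2, (f2 h).1, false⟩]⟩ := by
        rw [hplay, extend, if_neg hc]
      rw [hh']
      rw [show (⟨h.init, h.rounds ++ [⟨(f2 h).2, (f2 h).1, false⟩]⟩ : Hist V).pay1
        = h.pay1 - (f2 h).1 from by
          rw [hist_pay1_snoc]; simp; ring]
      push_neg at hc
      have h1 : (f1 h).1 ≤ (f2 h).1 := hc.1
      have h2 : 0 ≤ (f1 h).1 := le_min (Dl_nonneg G t _ _) ih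
      linarith

lemma fP1_legal (B : ℝ) (hB : 0 < B) : Legal1 G (fP1 G t B) B := by
  intro tb f2 v0 n
  refine ⟨le_min (Dl_nonneg G t _ _) (fP1_beta_nonneg G t B hB tb f2 v0 n),
    min_le_right _ _, (mv_spec G t _ _).1⟩

section MainP1

variable (B : ℝ) (tb : TieBreak V) (f2 : Strat V) (v0 : V)

lemma beta_le_one (f1 : Strat V) (hf2 : Legal2 G f2 (1 - B)) (n : ℕ) :
    B - (play tb f1 f2 v0 n).pay1 ≤ 1 := by
  obtain ⟨h0, h1, _⟩ := hf2 tb f1 v0 n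
  rw [Hist.pay2] at h1
  linarith

lemma main_step (hsc : StronglyConnected G) (hB : 0 < B)
    (hf2 : Legal2 G f2 (1 - B)) (n : ℕ)
    (hInv : RS G t ((st1 G t B (play tb (fP1 G t B) f2 v0 n)).2)
      (Sum.inl ((play tb (fP1 G t B) f2 v0 n).cur))
      < B - (play tb (fP1 G t B) f2 v0 n).pay1) :
    (RS G t ((st1 G t B (play tb (fP1 G t B) f2 v0 (n+1))).2)
      (Sum.inl ((play tb (fP1 G t B) f2 v0 (n+1)).cur))
      < B - (play tb (fP1 G t B) f2 v0 (n+1)).pay1)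
    ∧ ((play tb (fP1 G t B) f2 v0 (n+1)).cur ≠ t →
        2 ≤ (st1 G t B (play tb (fP1 G t B) f2 v0 n)).2 ∧
        (st1 G t B (play tb (fP1 G t B) f2 v0 (n+1))).2 =
          (st1 G t B (play tb (fP1 G t B) f2 v0 n)).2 - 1) := by
  set f1 := fP1 G t B with hf1
  set h := play tb f1 f2 v0 n with hh
  set i := (st1 G t B h).2 with hi
  set x := h.cur with hx
  set β := B - h.pay1 with hβ
  have hβ1' : B - (play tb f1 f2 v0 (n+1)).pay1 ≤ 1 := beta_le_one G B tb f2 v0 f1 hf2 (n+1)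
  have hi1 : 1 ≤ i := st1_snd_pos G t B h
  have hip : i - 1 + 1 = i := Nat.succ_pred_eq_of_pos hi1
  have hRSi : RS G t i (Sum.inl x) = (sup1 G t (i-1) x + inf1 G t (i-1) x) / 2 := by
    have h := RS_succ_inl' G t (i-1) x
    rw [hip] at h
    exact h
  have hβpos : 0 < β := lt_of_le_of_lt (RS_nonneg G t i (Sum.inl x)) hInv
  have hDle : Dl G t (i-1) x ≤ RS G t i (Sum.inl x) := by
    have h := Dl_le_RS G t (i-1) x
    rw [hip] at h
    exact h
  have happ : f1 h = (min (Dl G t (i - 1) x) β, mv G t (i - 1) x) := rfl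
  have hbid1 : (f1 h).1 = Dl G t (i-1) x := by
    rw [happ]
    exact min_eq_left (le_trans hDle hInv.le)
  have hmv1 : (f1 h).2 = mv G t (i-1) x := by rw [happ]
  have hfst : (st1 G t B h).1 = β := st1_fst G t B h
  have hplay : play tb f1 f2 v0 (n+1) = extend tb f1 f2 h := rfl
  by_cases hc : (f2 h).1 < (f1 h).1 ∨ ((f1 h).1 = (f2 h).1 ∧ tb h = true)
  · -- Player 1 wins the bidding
    have hh' : play tb f1 f2 v0 (n+1) = ⟨h.init, h.rounds ++ [⟨(f1 h).2, (f1 h).1, true⟩]⟩ := by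
      rw [hplay, extend, if_pos hc]
    have hcur' : (play tb f1 f2 v0 (n+1)).cur = mv G t (i-1) x := by
      rw [hh', hist_cur_snoc, hmv1]
    have hpay' : B - (play tb f1 f2 v0 (n+1)).pay1 = β - Dl G t (i-1) x := by
      rw [hh', hist_pay1_snoc]
      rw [show (if (⟨(f1 h).2, (f1 h).1, true⟩ : BidRound V).p1Won then
        (⟨(f1 h).2, (f1 h).1, true⟩ : BidRound V).bid
        else -(⟨(f1 h).2, (f1 h).1, true⟩ : BidRound V).bid) = (f1 h).1 from rfl]
      rw [hbid1, hβ]; ring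
    have hst' : st1 G t B (play tb f1 f2 v0 (n+1)) = step1 G t (st1 G t B h) ⟨(f1 h).2, (f1 h).1, true⟩ := by
      rw [hh']
      exact st1_snoc G t B h.init h.rounds _
    have hstep : step1 G t (st1 G t B h) ⟨(f1 h).2, (f1 h).1, true⟩ =
        ((st1 G t B h).1 - (f1 h).1,
         if (f1 h).2 = t ∨ i ≤ 1 then rst G t (f1 h).2 ((st1 G t B h).1 - (f1 h).1)
         else i - 1) := rfl
    have hst2 : st1 G t B (play tb f1 f2 v0 (n+1)) =
        (β - Dl G t (i-1) x,
         if mv G t (i-1) x = t ∨ i ≤ 1 then rst G t (mv G t (i-1) x) (β - Dl G t (i-1) x)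
         else i - 1) := by
      rw [hst', hstep, hfst, hbid1, hmv1]
    have hβ'gt : β - Dl G t (i-1) x > inf1 G t (i-1) x := by
      rw [Dl] at *
      rw [hRSi] at hInv
      linarith
    rcases (mv_spec G t (i-1) x).2 with ⟨hmt, hinf0⟩ | ⟨hmt, hinfeq⟩
    · -- moved to t: restart
      have hsnd : (st1 G t B (play tb f1 f2 v0 (n+1))).2 = rst G t t (β - Dl G t (i-1) x) := by
        rw [hst2]
        simp only [hmt, true_or, if_true]
      have hβ'pos : 0 < β - Dl G t (i-1) x := by rw [hinf0] at hβ'gt; linarith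
      have hβ'le1 : β - Dl G t (i-1) x ≤ 1 := by rw [← hpay']; exact hβ1'
      refine ⟨?_, fun hne => absurd (by rw [hcur', hmt]) hne⟩
      rw [hsnd, hcur', hmt, hpay']
      exact RS_rst_lt G t hsc hβ'pos hβ'le1
    · -- moved to a non-target vertex
      have hβ'inv : RS G t (i-1) (Sum.inl (mv G t (i-1) x)) < β - Dl G t (i-1) x := by
        rw [← hinfeq]; exact hβ'gt
      have hi2 : 2 ≤ i := by
        by_contra hcon
        have hieq : i = 1 := by omega
        have : RS G t (i-1) (Sum.inl (mv G t (i-1) x)) = 1 := by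
          rw [hieq]; rfl
        rw [this] at hβ'inv
        rw [hpay'] at hβ1'
        linarith
      have hsnd : (st1 G t B (play tb f1 f2 v0 (n+1))).2 = i - 1 := by
        rw [hst2]
        simp only []
        rw [if_neg (by push_neg; exact ⟨hmt, by omega⟩)]
      refine ⟨?_, fun _ => ⟨hi2, hsnd⟩⟩
      rw [hsnd, hcur', hpay']
      exact hβ'inv
  · -- Player 2 wins the bidding
    have hh' : play tb f1 f2 v0 (n+1) = ⟨h.init, h.rounds ++ [⟨(f2 h).2, (f2 h).1, false⟩]⟩ := by
      rw [hplay, extend, if_neg hc]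
    have hcur' : (play tb f1 f2 v0 (n+1)).cur = (f2 h).2 := by
      rw [hh', hist_cur_snoc]
    have hpay' : B - (play tb f1 f2 v0 (n+1)).pay1 = β + (f2 h).1 := by
      rw [hh', hist_pay1_snoc]
      rw [show (if (⟨(f2 h).2, (f2 h).1, false⟩ : BidRound V).p1Won then
        (⟨(f2 h).2, (f2 h).1, false⟩ : BidRound V).bid
        else -(⟨(f2 h).2, (f2 h).1, false⟩ : BidRound V).bid) = -(f2 h).1 from rfl]
      rw [hβ]; ring
    have hst' : st1 G t B (play tb f1 f2 v0 (n+1)) = step1 G t (st1 G t B h) ⟨(f2 h).2, (f2 h).1, false⟩ := by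
      rw [hh']
      exact st1_snoc G t B h.init h.rounds _
    have hstep : step1 G t (st1 G t B h) ⟨(f2 h).2, (f2 h).1, false⟩ =
        ((st1 G t B h).1 + (f2 h).1,
         if (f2 h).2 = t ∨ i ≤ 1 then rst G t ((f2 h).2) ((st1 G t B h).1 + (f2 h).1)
         else i - 1) := rfl
    have hst2 : st1 G t B (play tb f1 f2 v0 (n+1)) =
        (β + (f2 h).1,
         if (f2 h).2 = t ∨ i ≤ 1 then rst G t ((f2 h).2) (β + (f2 h).1)
         else i - 1) := by
      rw [hst', hstep, hfst]
    push_neg at hc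
    have hble : Dl G t (i-1) x ≤ (f2 h).1 := by
      rw [← hbid1]; exact hc.1
    have hedge : G.E x (f2 h).2 := (hf2 tb f1 v0 n).2.2
    have hβ'sup : sup1 G t (i-1) x < β + (f2 h).1 := by
      rw [hRSi] at hInv
      rw [Dl] at hble
      linarith
    by_cases hxt : (f2 h).2 = t
    · -- moved to t
      have hmem : (Sum.inr () : V ⊕ Unit) ∈ succu G t x := by
        rw [mem_succu]
        exact (show G.E x t from hxt ▸ hedge)
      have hβ'pos : 0 < β + (f2 h).1 := by
        have h1 : RS G t (i-1) (Sum.inr ()) ≤ sup1 G t (i-1) x := RS_le_sup1 G t _ _ hmem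
        rw [RS_inr] at h1
        linarith
      have hβ'le1 : β + (f2 h).1 ≤ 1 := by rw [← hpay']; exact hβ1'
      have hsnd : (st1 G t B (play tb f1 f2 v0 (n+1))).2 = rst G t t (β + (f2 h).1) := by
        rw [hst2]
        simp only [hxt, true_or, if_true]
      refine ⟨?_, fun hne => absurd (by rw [hcur']; exact hxt) hne⟩
      rw [hsnd, hcur', hxt, hpay']
      exact RS_rst_lt G t hsc hβ'pos hβ'le1
    · -- moved to a non-target vertex
      have hmem : (Sum.inl ((f2 h).2) : V ⊕ Unit) ∈ succu G t x := by
        rw [mem_succu]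
        exact ⟨hedge, hxt⟩
      have hβ'inv : RS G t (i-1) (Sum.inl ((f2 h).2)) < β + (f2 h).1 :=
        lt_of_le_of_lt (RS_le_sup1 G t _ _ hmem) hβ'sup
      have hi2 : 2 ≤ i := by
        by_contra hcon
        have hieq : i = 1 := by omega
        have : RS G t (i-1) (Sum.inl ((f2 h).2)) = 1 := by rw [hieq]; rfl
        rw [this] at hβ'inv
        rw [hpay'] at hβ1'
        linarith
      have hsnd : (st1 G t B (play tb f1 f2 v0 (n+1))).2 = i - 1 := by
        rw [hst2]
        simp only []
        rw [if_neg (by push_neg; exact ⟨hxt, by omega⟩)]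
      refine ⟨?_, fun _ => ⟨hi2, hsnd⟩⟩
      rw [hsnd, hcur', hpay']
      exact hβ'inv

lemma inv_all (hsc : StronglyConnected G) (hB : 0 < B) (hB1 : B ≤ 1)
    (hf2 : Legal2 G f2 (1 - B)) :
    ∀ n, RS G t ((st1 G t B (play tb (fP1 G t B) f2 v0 n)).2)
      (Sum.inl ((play tb (fP1 G t B) f2 v0 n).cur))
      < B - (play tb (fP1 G t B) f2 v0 n).pay1 := by
  intro n
  induction n with
  | zero =>
    have h1 : play tb (fP1 G t B) f2 v0 0 = ⟨v0, []⟩ := rfl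
    rw [h1]
    have h2 : (st1 G t B ⟨v0, []⟩).2 = rst G t v0 B := rfl
    have h3 : Hist.cur (⟨v0, []⟩ : Hist V) = v0 := rfl
    have h4 : Hist.pay1 (⟨v0, []⟩ : Hist V) = 0 := by simp [Hist.pay1]
    rw [h2, h3, h4, sub_zero]
    exact RS_rst_lt G t hsc hB hB1
  | succ n ih =>
    exact (main_step G t B tb f2 v0 hsc hB hf2 n ih).1

lemma reach_t (hsc : StronglyConnected G) (hB : 0 < B) (hB1 : B ≤ 1)
    (hf2 : Legal2 G f2 (1 - B)) :
    ∀ (k n : ℕ), (st1 G t B (play tb (fP1 G t B) f2 v0 n)).2 ≤ k →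
      ∃ m, n < m ∧ (play tb (fP1 G t B) f2 v0 m).cur = t := by
  intro k
  induction k with
  | zero =>
    intro n hk
    exact absurd (le_trans (st1_snd_pos G t B _) hk) (by omega)
  | succ k ih =>
    intro n hk
    by_cases hxt : (play tb (fP1 G t B) f2 v0 (n+1)).cur = t
    · exact ⟨n+1, Nat.lt_succ_self n, hxt⟩
    · obtain ⟨h2, hstep⟩ := (main_step G t B tb f2 v0 hsc hB hf2 n
        (inv_all G t B tb f2 v0 hsc hB hB1 hf2 n)).2 hxt
      obtain ⟨m, hm, ht⟩ := ih (n+1) (by omega)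
      exact ⟨m, by omega, ht⟩

lemma visits_t (hsc : StronglyConnected G) (hB : 0 < B) (hB1 : B ≤ 1)
    (hf2 : Legal2 G f2 (1 - B)) :
    ∀ N, ∃ m ≥ N, visit tb (fP1 G t B) f2 v0 m = t := by
  intro N
  obtain ⟨m, hm, ht⟩ := reach_t G t B tb f2 v0 hsc hB hB1 hf2
    (st1 G t B (play tb (fP1 G t B) f2 v0 N)).2 N le_rfl
  exact ⟨m, hm.le, ht⟩

end MainP1


/-! ### Player 2 machinery -/

/-- State machine for Player 2's strategy (first component tracks Player 2's budget). -/
noncomputable def step2 (G : BiddingGame V) (t : V) : ℝ × ℕ → BidRound V → ℝ × ℕ :=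
  fun a r =>
    ((if r.p1Won then a.1 + r.bid else a.1 - r.bid),
     if r.dest = t ∨ a.2 ≤ 1 then rst G t r.dest (if r.p1Won then a.1 + r.bid else a.1 - r.bid)
     else a.2 - 1)

noncomputable def st2 (G : BiddingGame V) (t : V) (B : ℝ) (h : Hist V) : ℝ × ℕ :=
  h.rounds.foldl (step2 G t) (B, rst G t h.init B)

/-- Player 2's strategy. -/
noncomputable def fP2 (G : BiddingGame V) (t : V) (B : ℝ) : Strat V := fun h =>
  (min (Dl G t ((st2 G t B h).2 - 1) h.cur) (B + h.pay1),
   mv G t ((st2 G t B h).2 - 1) h.cur)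

lemma st2_fst (B : ℝ) (h : Hist V) : (st2 G t B h).1 = B + h.pay1 := by
  have key : ∀ (l : List (BidRound V)) (a : ℝ × ℕ),
      (l.foldl (step2 G t) a).1 = a.1 +
        (l.map (fun r => if r.p1Won then r.bid else -r.bid)).sum := by
    intro l
    induction l with
    | nil => intro a; simp
    | cons r l ih =>
      intro a
      rw [List.foldl_cons, ih, List.map_cons, List.sum_cons]
      simp only [step2]
      by_cases hw : r.p1Won <;> simp [hw] <;> ring
  rw [st2, key, Hist.pay1]

lemma st2_snd_pos (B : ℝ) (h : Hist V) : 1 ≤ (st2 G t B h).2 := by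
  have key : ∀ (l : List (BidRound V)) (a : ℝ × ℕ), 1 ≤ a.2 →
      1 ≤ (l.foldl (step2 G t) a).2 := by
    intro l
    induction l with
    | nil => intro a ha; exact ha
    | cons r l ih =>
      intro a ha
      rw [List.foldl_cons]
      apply ih
      simp only [step2]
      by_cases hcond : r.dest = t ∨ a.2 ≤ 1
      · rw [if_pos hcond]; exact one_le_rst G t _ _
      · rw [if_neg hcond]
        push_neg at hcond
        omega
  exact key _ _ (one_le_rst G t _ _)

lemma st2_snoc (B : ℝ) (x : V) (l : List (BidRound V)) (r : BidRound V) :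
    st2 G t B ⟨x, l ++ [r]⟩ = step2 G t (st2 G t B ⟨x, l⟩) r := by
  simp [st2, List.foldl_append]

lemma fP2_beta_nonneg (B : ℝ) (hB : 0 < B) (tb : TieBreak V) (f1 : Strat V) (v0 : V) :
    ∀ n, 0 ≤ B + (play tb f1 (fP2 G t B) v0 n).pay1 := by
  intro n
  induction n with
  | zero =>
    simp [play, Hist.pay1]
    exact hB.le
  | succ n ih =>
    set f2 := fP2 G t B with hf2
    set h := play tb f1 f2 v0 n with hh
    have hplay : play tb f1 f2 v0 (n+1) = extend tb f1 f2 h := rfl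
    by_cases hc : (f2 h).1 < (f1 h).1 ∨ ((f1 h).1 = (f2 h).1 ∧ tb h = true)
    · have hh' : play tb f1 f2 v0 (n+1) = ⟨h.init, h.rounds ++ [⟨(f1 h).2, (f1 h).1, true⟩]⟩ := by
        rw [hplay, extend, if_pos hc]
      rw [hh']
      rw [show (⟨h.init, h.rounds ++ [⟨(f1 h).2, (f1 h).1, true⟩]⟩ : Hist V).pay1
        = h.pay1 + (f1 h).1 from by
          rw [hist_pay1_snoc]; simp]
      have h2 : 0 ≤ (f2 h).1 := le_min (Dl_nonneg G t _ _) ih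
      have h1 : (f2 h).1 ≤ (f1 h).1 := by
        rcases hc with hlt | ⟨heq, _⟩
        · exact hlt.le
        · exact heq.ge
      linarith
    · have hh' : play tb f1 f2 v0 (n+1) = ⟨h.init, h.rounds ++ [⟨(f2 h).2, (f2 h).1, false⟩]⟩ := by
        rw [hplay, extend, if_neg hc]
      rw [hh']
      rw [show (⟨h.init, h.rounds ++ [⟨(f2 h).2, (f2 h).1, false⟩]⟩ : Hist V).pay1
        = h.pay1 - (f2 h).1 from by
          rw [hist_pay1_snoc]; simp; ring]
      have : (f2 h).1 ≤ B + h.pay1 := min_le_right _ _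
      linarith

lemma fP2_legal (B : ℝ) (hB : 0 < B) : Legal2 G (fP2 G t B) B := by
  intro tb f1 v0 n
  refine ⟨le_min (Dl_nonneg G t _ _) (fP2_beta_nonneg G t B hB tb f1 v0 n), ?_,
    (mv_spec G t _ _).1⟩
  rw [Hist.pay2, sub_neg_eq_add]
  exact min_le_right _ _

section MainP2

variable (B : ℝ) (tb : TieBreak V) (f1 : Strat V) (v0 : V)

lemma beta2_le_one (hf1 : Legal1 G f1 (1 - B)) (f2 : Strat V) (n : ℕ) :
    B + (play tb f1 f2 v0 n).pay1 ≤ 1 := by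
  obtain ⟨h0, h1, _⟩ := hf1 tb f2 v0 n
  linarith

lemma main_step2 (hsc : StronglyConnected G) (hB : 0 < B)
    (hf1 : Legal1 G f1 (1 - B)) (n : ℕ)
    (hInv : RS G t ((st2 G t B (play tb f1 (fP2 G t B) v0 n)).2)
      (Sum.inl ((play tb f1 (fP2 G t B) v0 n).cur))
      < B + (play tb f1 (fP2 G t B) v0 n).pay1) :
    (RS G t ((st2 G t B (play tb f1 (fP2 G t B) v0 (n+1))).2)
      (Sum.inl ((play tb f1 (fP2 G t B) v0 (n+1)).cur))
      < B + (play tb f1 (fP2 G t B) v0 (n+1)).pay1)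
    ∧ ((play tb f1 (fP2 G t B) v0 (n+1)).cur ≠ t →
        2 ≤ (st2 G t B (play tb f1 (fP2 G t B) v0 n)).2 ∧
        (st2 G t B (play tb f1 (fP2 G t B) v0 (n+1))).2 =
          (st2 G t B (play tb f1 (fP2 G t B) v0 n)).2 - 1) := by
  set f2 := fP2 G t B with hf2
  set h := play tb f1 f2 v0 n with hh
  set i := (st2 G t B h).2 with hi
  set x := h.cur with hx
  set β := B + h.pay1 with hβ
  have hβ1' : B + (play tb f1 f2 v0 (n+1)).pay1 ≤ 1 :=
    beta2_le_one G B tb f1 v0 hf1 f2 (n+1)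
  have hi1 : 1 ≤ i := st2_snd_pos G t B h
  have hip : i - 1 + 1 = i := Nat.succ_pred_eq_of_pos hi1
  have hRSi : RS G t i (Sum.inl x) = (sup1 G t (i-1) x + inf1 G t (i-1) x) / 2 := by
    have h := RS_succ_inl' G t (i-1) x
    rw [hip] at h
    exact h
  have hβpos : 0 < β := lt_of_le_of_lt (RS_nonneg G t i (Sum.inl x)) hInv
  have hDle : Dl G t (i-1) x ≤ RS G t i (Sum.inl x) := by
    have h := Dl_le_RS G t (i-1) x
    rw [hip] at h
    exact h
  have happ : f2 h = (min (Dl G t (i - 1) x) β, mv G t (i - 1) x) := rfl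
  have hbid2 : (f2 h).1 = Dl G t (i-1) x := by
    rw [happ]
    exact min_eq_left (le_trans hDle hInv.le)
  have hmv2 : (f2 h).2 = mv G t (i-1) x := by rw [happ]
  have hfst : (st2 G t B h).1 = β := st2_fst G t B h
  have hplay : play tb f1 f2 v0 (n+1) = extend tb f1 f2 h := rfl
  by_cases hc : (f2 h).1 < (f1 h).1 ∨ ((f1 h).1 = (f2 h).1 ∧ tb h = true)
  · -- Player 1 wins the bidding: he pays at least Player 2's bid
    have hh' : play tb f1 f2 v0 (n+1) = ⟨h.init, h.rounds ++ [⟨(f1 h).2, (f1 h).1, true⟩]⟩ := by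
      rw [hplay, extend, if_pos hc]
    have hcur' : (play tb f1 f2 v0 (n+1)).cur = (f1 h).2 := by
      rw [hh', hist_cur_snoc]
    have hpay' : B + (play tb f1 f2 v0 (n+1)).pay1 = β + (f1 h).1 := by
      rw [hh', hist_pay1_snoc]
      rw [show (if (⟨(f1 h).2, (f1 h).1, true⟩ : BidRound V).p1Won then
        (⟨(f1 h).2, (f1 h).1, true⟩ : BidRound V).bid
        else -(⟨(f1 h).2, (f1 h).1, true⟩ : BidRound V).bid) = (f1 h).1 from rfl]
      rw [hβ]; ring
    have hst' : st2 G t B (play tb f1 f2 v0 (n+1)) = step2 G t (st2 G t B h) ⟨(f1 h).2, (f1 h).1, true⟩ := by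
      rw [hh']
      exact st2_snoc G t B h.init h.rounds _
    have hstep : step2 G t (st2 G t B h) ⟨(f1 h).2, (f1 h).1, true⟩ =
        ((st2 G t B h).1 + (f1 h).1,
         if (f1 h).2 = t ∨ i ≤ 1 then rst G t ((f1 h).2) ((st2 G t B h).1 + (f1 h).1)
         else i - 1) := rfl
    have hst2' : st2 G t B (play tb f1 f2 v0 (n+1)) =
        (β + (f1 h).1,
         if (f1 h).2 = t ∨ i ≤ 1 then rst G t ((f1 h).2) (β + (f1 h).1)
         else i - 1) := by
      rw [hst', hstep, hfst]
    have hble : Dl G t (i-1) x ≤ (f1 h).1 := by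
      rw [← hbid2]
      rcases hc with hlt | ⟨heq, _⟩
      · exact hlt.le
      · exact heq.ge
    have hedge : G.E x (f1 h).2 := (hf1 tb f2 v0 n).2.2
    have hβ'sup : sup1 G t (i-1) x < β + (f1 h).1 := by
      rw [hRSi] at hInv
      rw [Dl] at hble
      linarith
    by_cases hxt : (f1 h).2 = t
    · have hmem : (Sum.inr () : V ⊕ Unit) ∈ succu G t x := by
        rw [mem_succu]
        exact (show G.E x t from hxt ▸ hedge)
      have hβ'pos : 0 < β + (f1 h).1 := by
        have h1 : RS G t (i-1) (Sum.inr ()) ≤ sup1 G t (i-1) x := RS_le_sup1 G t _ _ hmem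
        rw [RS_inr] at h1
        linarith
      have hβ'le1 : β + (f1 h).1 ≤ 1 := by rw [← hpay']; exact hβ1'
      have hsnd : (st2 G t B (play tb f1 f2 v0 (n+1))).2 = rst G t t (β + (f1 h).1) := by
        rw [hst2']
        simp only [hxt, true_or, if_true]
      refine ⟨?_, fun hne => absurd (by rw [hcur']; exact hxt) hne⟩
      rw [hsnd, hcur', hxt, hpay']
      exact RS_rst_lt G t hsc hβ'pos hβ'le1
    · have hmem : (Sum.inl ((f1 h).2) : V ⊕ Unit) ∈ succu G t x := by
        rw [mem_succu]
        exact ⟨hedge, hxt⟩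
      have hβ'inv : RS G t (i-1) (Sum.inl ((f1 h).2)) < β + (f1 h).1 :=
        lt_of_le_of_lt (RS_le_sup1 G t _ _ hmem) hβ'sup
      have hi2 : 2 ≤ i := by
        by_contra hcon
        have hieq : i = 1 := by omega
        have : RS G t (i-1) (Sum.inl ((f1 h).2)) = 1 := by rw [hieq]; rfl
        rw [this] at hβ'inv
        rw [hpay'] at hβ1'
        linarith
      have hsnd : (st2 G t B (play tb f1 f2 v0 (n+1))).2 = i - 1 := by
        rw [hst2']
        simp only []
        rw [if_neg (by push_neg; exact ⟨hxt, by omega⟩)]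
      refine ⟨?_, fun _ => ⟨hi2, hsnd⟩⟩
      rw [hsnd, hcur', hpay']
      exact hβ'inv
  · -- Player 2 wins the bidding: he pays his own bid and moves
    have hh' : play tb f1 f2 v0 (n+1) = ⟨h.init, h.rounds ++ [⟨(f2 h).2, (f2 h).1, false⟩]⟩ := by
      rw [hplay, extend, if_neg hc]
    have hcur' : (play tb f1 f2 v0 (n+1)).cur = mv G t (i-1) x := by
      rw [hh', hist_cur_snoc, hmv2]
    have hpay' : B + (play tb f1 f2 v0 (n+1)).pay1 = β - Dl G t (i-1) x := by
      rw [hh', hist_pay1_snoc]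
      rw [show (if (⟨(f2 h).2, (f2 h).1, false⟩ : BidRound V).p1Won then
        (⟨(f2 h).2, (f2 h).1, false⟩ : BidRound V).bid
        else -(⟨(f2 h).2, (f2 h).1, false⟩ : BidRound V).bid) = -(f2 h).1 from rfl]
      rw [hbid2, hβ]; ring
    have hst' : st2 G t B (play tb f1 f2 v0 (n+1)) = step2 G t (st2 G t B h) ⟨(f2 h).2, (f2 h).1, false⟩ := by
      rw [hh']
      exact st2_snoc G t B h.init h.rounds _
    have hstep : step2 G t (st2 G t B h) ⟨(f2 h).2, (f2 h).1, false⟩ =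
        ((st2 G t B h).1 - (f2 h).1,
         if (f2 h).2 = t ∨ i ≤ 1 then rst G t ((f2 h).2) ((st2 G t B h).1 - (f2 h).1)
         else i - 1) := rfl
    have hst2' : st2 G t B (play tb f1 f2 v0 (n+1)) =
        (β - Dl G t (i-1) x,
         if mv G t (i-1) x = t ∨ i ≤ 1 then rst G t (mv G t (i-1) x) (β - Dl G t (i-1) x)
         else i - 1) := by
      rw [hst', hstep, hfst, hbid2, hmv2]
    have hβ'gt : β - Dl G t (i-1) x > inf1 G t (i-1) x := by
      rw [Dl] at *
      rw [hRSi] at hInv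
      linarith
    rcases (mv_spec G t (i-1) x).2 with ⟨hmt, hinf0⟩ | ⟨hmt, hinfeq⟩
    · have hsnd : (st2 G t B (play tb f1 f2 v0 (n+1))).2 = rst G t t (β - Dl G t (i-1) x) := by
        rw [hst2']
        simp only [hmt, true_or, if_true]
      have hβ'pos : 0 < β - Dl G t (i-1) x := by rw [hinf0] at hβ'gt; linarith
      have hβ'le1 : β - Dl G t (i-1) x ≤ 1 := by rw [← hpay']; exact hβ1'
      refine ⟨?_, fun hne => absurd (by rw [hcur', hmt]) hne⟩
      rw [hsnd, hcur', hmt, hpay']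
      exact RS_rst_lt G t hsc hβ'pos hβ'le1
    · have hβ'inv : RS G t (i-1) (Sum.inl (mv G t (i-1) x)) < β - Dl G t (i-1) x := by
        rw [← hinfeq]; exact hβ'gt
      have hi2 : 2 ≤ i := by
        by_contra hcon
        have hieq : i = 1 := by omega
        have : RS G t (i-1) (Sum.inl (mv G t (i-1) x)) = 1 := by
          rw [hieq]; rfl
        rw [this] at hβ'inv
        rw [hpay'] at hβ1'
        linarith
      have hsnd : (st2 G t B (play tb f1 f2 v0 (n+1))).2 = i - 1 := by
        rw [hst2']
        simp only []
        rw [if_neg (by push_neg; exact ⟨hmt, by omega⟩)]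
      refine ⟨?_, fun _ => ⟨hi2, hsnd⟩⟩
      rw [hsnd, hcur', hpay']
      exact hβ'inv

lemma inv_all2 (hsc : StronglyConnected G) (hB : 0 < B) (hB1 : B ≤ 1)
    (hf1 : Legal1 G f1 (1 - B)) :
    ∀ n, RS G t ((st2 G t B (play tb f1 (fP2 G t B) v0 n)).2)
      (Sum.inl ((play tb f1 (fP2 G t B) v0 n).cur))
      < B + (play tb f1 (fP2 G t B) v0 n).pay1 := by
  intro n
  induction n with
  | zero =>
    have h1 : play tb f1 (fP2 G t B) v0 0 = ⟨v0, []⟩ := rfl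
    rw [h1]
    have h2 : (st2 G t B ⟨v0, []⟩).2 = rst G t v0 B := rfl
    have h3 : Hist.cur (⟨v0, []⟩ : Hist V) = v0 := rfl
    have h4 : Hist.pay1 (⟨v0, []⟩ : Hist V) = 0 := by simp [Hist.pay1]
    rw [h2, h3, h4, add_zero]
    exact RS_rst_lt G t hsc hB hB1
  | succ n ih =>
    exact (main_step2 G t B tb f1 v0 hsc hB hf1 n ih).1

lemma reach_t2 (hsc : StronglyConnected G) (hB : 0 < B) (hB1 : B ≤ 1)
    (hf1 : Legal1 G f1 (1 - B)) :
    ∀ (k n : ℕ), (st2 G t B (play tb f1 (fP2 G t B) v0 n)).2 ≤ k →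
      ∃ m, n < m ∧ (play tb f1 (fP2 G t B) v0 m).cur = t := by
  intro k
  induction k with
  | zero =>
    intro n hk
    exact absurd (le_trans (st2_snd_pos G t B _) hk) (by omega)
  | succ k ih =>
    intro n hk
    by_cases hxt : (play tb f1 (fP2 G t B) v0 (n+1)).cur = t
    · exact ⟨n+1, Nat.lt_succ_self n, hxt⟩
    · obtain ⟨h2, hstep⟩ := (main_step2 G t B tb f1 v0 hsc hB hf1 n
        (inv_all2 G t B tb f1 v0 hsc hB hB1 hf1 n)).2 hxt
      obtain ⟨m, hm, ht⟩ := ih (n+1) (by omega)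
      exact ⟨m, by omega, ht⟩

lemma visits_t2 (hsc : StronglyConnected G) (hB : 0 < B) (hB1 : B ≤ 1)
    (hf1 : Legal1 G f1 (1 - B)) :
    ∀ N, ∃ m ≥ N, visit tb f1 (fP2 G t B) v0 m = t := by
  intro N
  obtain ⟨m, hm, ht⟩ := reach_t2 G t B tb f1 v0 hsc hB hB1 hf1
    (st2 G t B (play tb f1 (fP2 G t B) v0 N)).2 N le_rfl
  exact ⟨m, hm.le, ht⟩

end MainP2

/-! ### From infinitely many visits of the maximal-parity vertex to the parity value -/

lemma sSup_visits {V : Type} [Fintype V] [Nonempty V] (p : V → ℕ) (t : V) (g : ℕ → V)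
    (ht : p t = Finset.univ.sup' Finset.univ_nonempty p)
    (hio : ∀ N, ∃ m ≥ N, g m = t) :
    sSup {k : ℕ | ∀ N : ℕ, ∃ n ≥ N, p (g n) = k} =
      Finset.univ.sup' Finset.univ_nonempty p := by
  set d := Finset.univ.sup' Finset.univ_nonempty p with hd
  set A := {k : ℕ | ∀ N : ℕ, ∃ n ≥ N, p (g n) = k} with hA
  have hdA : d ∈ A := by
    intro N
    obtain ⟨m, hm, hgm⟩ := hio N
    exact ⟨m, hm, by rw [hgm, ht]⟩
  have hbd : ∀ k ∈ A, k ≤ d := by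
    intro k hk
    obtain ⟨n, _, hn⟩ := hk 0
    rw [← hn]
    exact Finset.le_sup' p (Finset.mem_univ _)
  exact le_antisymm (csSup_le ⟨d, hdA⟩ hbd) (le_csSup ⟨d, hbd⟩ hdA)

end ParityAux

/-- In a strongly-connected parity bidding game there is
`τ ∈ {0, 1}` that is the threshold budget of every vertex, and `τ = 0` iff the maximal
parity index in the game is odd; so with an odd maximal index Player 1 wins from every
vertex with every positive budget, and with an even maximal index Player 2 does. -/
theorem parity_scc_classification
    {V : Type} [Fintype V] [Nonempty V] (G : BiddingGame V) (p : V → ℕ)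
    (hsc : StronglyConnected G) :
    ∃ τ : ℝ, (τ = 0 ∨ τ = 1) ∧ (∀ v : V, IsThreshParity G p v τ) ∧
      (τ = 0 ↔ Odd (Finset.univ.sup' Finset.univ_nonempty p)) := by
  obtain ⟨t, _, htd⟩ := Finset.exists_mem_eq_sup' Finset.univ_nonempty p
  by_cases hodd : Odd (Finset.univ.sup' Finset.univ_nonempty p)
  · refine ⟨0, Or.inl rfl, fun v => ⟨?_, ?_⟩, by simp [hodd]⟩
    · intro B hB1 hB0 tb
      refine ⟨ParityAux.fP1 G t B, ParityAux.fP1_legal G t B hB0, ?_⟩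
      intro f2 hf2
      unfold Win1Parity
      rw [ParityAux.sSup_visits p t (fun n => visit tb (ParityAux.fP1 G t B) f2 v n)
        htd.symm
        (ParityAux.visits_t G t B tb f2 v hsc hB0 hB1 hf2)]
      exact hodd
    · intro B hB1 h1B
      rw [show (1:ℝ) - 0 = 1 by ring] at h1B
      exact absurd (lt_of_lt_of_le h1B hB1) (lt_irrefl 1)
  · refine ⟨1, Or.inr rfl, fun v => ⟨?_, ?_⟩, ?_⟩
    · intro B hB1 h1B
      exact absurd (lt_of_lt_of_le h1B hB1) (lt_irrefl 1)
    · intro B hB1 hB0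
      rw [show (1:ℝ) - 1 = 0 by ring] at hB0
      intro tb
      refine ⟨ParityAux.fP2 G t B, ParityAux.fP2_legal G t B hB0, ?_⟩
      intro f1 hf1
      unfold Win1Parity
      rw [ParityAux.sSup_visits p t (fun n => visit tb f1 (ParityAux.fP2 G t B) v n)
        htd.symm
        (ParityAux.visits_t2 G t B tb f1 v hsc hB0 hB1 hf1)]
      exact hodd
    · constructor
      · intro h
        exact absurd h one_ne_zero
      · intro h
        exact absurd h hodd
end
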